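/- Let α > 1 and let P = (p_1, ..., p_k), Q = (q_1, ..., q_k) be probability vectors with p_i > 0 for all i and p_1 ≥ p_2 ≥ ... ≥ p_k. If there exists j ≠ 1 with q_j ≥ q_1, then the Rényi divergence (1/(α-1)) log(∑_i q_i^α p_i^{1-α}) is at least -log(1 - p_1 - p_2 + 2((p_1^{1-α} + p_2^{1-α})/2)^{1/(1-α)}). -/

import Mathlib

open Finset

lemma renyi_superadd {ι : Type*} {α : ℝ} (hα : 1 < α) (s : Finset ι) (q p : ι → ℝ)
    (hq : ∀ i ∈ s, 0 ≤ q i) (hp : ∀ i ∈ s, 0 < p i) :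
    (∑ i ∈ s, q i) ^ α * (∑ i ∈ s, p i) ^ (1 - α) ≤ ∑ i ∈ s, q i ^ α * p i ^ (1 - α) := by
  rcases s.eq_empty_or_nonempty with rfl | hs
  · simp [Real.zero_rpow (by positivity : α ≠ 0)]
  · set σ := ∑ i ∈ s, p i with hσdef
    have hσ : 0 < σ := Finset.sum_pos hp hs
    have hQnn : 0 ≤ ∑ i ∈ s, q i := Finset.sum_nonneg hq
    have key := Real.rpow_arith_mean_le_arith_mean_rpow s (fun i => p i / σ)
      (fun i => q i / p i)
      (fun i hi => div_nonneg (hp i hi).le hσ.le)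
      (by rw [← Finset.sum_div]; exact div_self hσ.ne')
      (fun i hi => div_nonneg (hq i hi) (hp i hi).le) hα.le
    have e1' : ∀ i ∈ s, p i / σ * (q i / p i) = q i / σ := fun i hi => by
      have h := (hp i hi).ne'
      field_simp
    have e1 : ∑ i ∈ s, p i / σ * (q i / p i) = (∑ i ∈ s, q i) / σ := by
      rw [Finset.sum_congr rfl e1', ← Finset.sum_div]
    have e2 : ∀ i ∈ s, p i / σ * (q i / p i) ^ α = q i ^ α * p i ^ (1 - α) / σ := by
      intro i hi
      have hpi := hp i hi
      rw [Real.div_rpow (hq i hi) hpi.le]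
      have h1 : p i ^ (1 - α) = p i / p i ^ α := by
        rw [Real.rpow_sub hpi, Real.rpow_one]
      rw [h1]
      have : p i ^ α ≠ 0 := by positivity
      field_simp
    rw [e1, Finset.sum_congr rfl e2, ← Finset.sum_div] at key
    have e3 : ((∑ i ∈ s, q i) / σ) ^ α = (∑ i ∈ s, q i) ^ α / σ ^ α := by
      rw [Real.div_rpow hQnn hσ.le]
    rw [e3] at key
    have hσα : 0 < σ ^ α := Real.rpow_pos_of_pos hσ _
    have e4 : σ ^ (1 - α) = σ / σ ^ α := by rw [Real.rpow_sub hσ, Real.rpow_one]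
    rw [e4]
    calc (∑ i ∈ s, q i) ^ α * (σ / σ ^ α)
        = (∑ i ∈ s, q i) ^ α / σ ^ α * σ := by ring
      _ ≤ (∑ i ∈ s, q i ^ α * p i ^ (1 - α)) / σ * σ :=
          mul_le_mul_of_nonneg_right key hσ.le
      _ = ∑ i ∈ s, q i ^ α * p i ^ (1 - α) := div_mul_cancel₀ _ hσ.ne'

lemma renyi_pair_ineq {α : ℝ} (hα : 1 < α) {a b c d : ℝ} (ha : 0 ≤ a) (hb : 0 ≤ b)
    (hc : 0 < c) (hd : 0 ≤ d) (hbd : d = 0 → b = 0) :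
    (a + b) ^ α * (c + d) ^ (1 - α) ≤ a ^ α * c ^ (1 - α) + b ^ α * d ^ (1 - α) := by
  rcases hd.eq_or_lt with rfl | hd'
  · rw [hbd rfl]
    simp [Real.zero_rpow (by positivity : α ≠ 0)]
  · have := renyi_superadd hα (Finset.univ : Finset (Fin 2)) ![a, b] ![c, d]
      (fun i _ => by fin_cases i <;> simpa) (fun i _ => by fin_cases i <;> simpa)
    simpa [Fin.sum_univ_two] using this


lemma renyi_pair_min {α : ℝ} (hα : 1 < α) {u v A B : ℝ} (hu : 0 ≤ u) (huv : u ≤ v)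
    (hA : 0 ≤ A) (hAB : A ≤ B) :
    ((u + v) / 2) ^ α * (A + B) ≤ u ^ α * A + v ^ α * B := by
  have hv : 0 ≤ v := hu.trans huv
  have hm : 0 ≤ (u + v) / 2 := by linarith
  have h1 : ((u + v) / 2) ^ α ≤ (u ^ α + v ^ α) / 2 := by
    have := (convexOn_rpow hα.le).2 (Set.mem_Ici.2 hu) (Set.mem_Ici.2 hv)
      (by norm_num : (0:ℝ) ≤ 1/2) (by norm_num : (0:ℝ) ≤ 1/2) (by norm_num)
    simp only [smul_eq_mul] at this
    calc ((u + v) / 2) ^ α = (1/2 * u + 1/2 * v) ^ α := by ring_nf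
      _ ≤ 1/2 * u ^ α + 1/2 * v ^ α := this
      _ = (u ^ α + v ^ α) / 2 := by ring
  have h2 : u ^ α ≤ ((u + v) / 2) ^ α := Real.rpow_le_rpow hu (by linarith) (by linarith)
  have hB : 0 ≤ B := hA.trans hAB
  nlinarith [mul_nonneg (sub_nonneg.2 hAB) (sub_nonneg.2 h2),
    mul_nonneg hB (by linarith : (0:ℝ) ≤ u ^ α + v ^ α - 2 * ((u + v) / 2) ^ α)]

lemma renyi_key (k : ℕ) (α : ℝ) (hα : 1 < α) (P Q : Fin (k + 2) → ℝ)
    (hPpos : ∀ i, 0 < P i) (hPsum : ∑ i, P i = 1)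
    (hQnn : ∀ i, 0 ≤ Q i) (hQsum : ∑ i, Q i = 1)
    (hP01 : P 1 ≤ P 0) (hQ01 : Q 0 ≤ Q 1) :
    (1 - P 0 - P 1 + 2 * ((P 0 ^ (1 - α) + P 1 ^ (1 - α)) / 2) ^ (1 / (1 - α))) ^ (1 - α)
      ≤ ∑ i, Q i ^ α * P i ^ (1 - α) := by
  have h1α : 1 - α < 0 := by linarith
  have h1α0 : (1 : ℝ) - α ≠ 0 := by linarith
  have h01 : (0 : Fin (k + 2)) ≠ 1 := by
    simp [Fin.ext_iff]
  set A := P 0 ^ (1 - α) with hAdef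
  set B := P 1 ^ (1 - α) with hBdef
  have hApos : 0 < A := Real.rpow_pos_of_pos (hPpos 0) _
  have hBpos : 0 < B := Real.rpow_pos_of_pos (hPpos 1) _
  have hAB : A ≤ B := Real.rpow_le_rpow_of_nonpos (hPpos 1) hP01 h1α.le
  set M := ((A + B) / 2) ^ (1 / (1 - α)) with hMdef
  have hMpos : 0 < M := Real.rpow_pos_of_pos (by positivity) _
  have hM' : M ^ (1 - α) = (A + B) / 2 := by
    rw [hMdef, ← Real.rpow_mul (by positivity), one_div_mul_cancel h1α0, Real.rpow_one]
  set s : Finset (Fin (k + 2)) := Finset.univ \ {0, 1} with hsdef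
  have hsplit : ∀ f : Fin (k + 2) → ℝ, ∑ i, f i = f 0 + f 1 + ∑ i ∈ s, f i := by
    intro f
    rw [hsdef, ← Finset.sum_sdiff (Finset.subset_univ ({0, 1} : Finset (Fin (k + 2)))),
      Finset.sum_pair h01]
    ring
  set t := ∑ i ∈ s, Q i with htdef
  set pt := ∑ i ∈ s, P i with hptdef
  have htsum : Q 0 + Q 1 + t = 1 := by rw [← hsplit Q]; exact hQsum
  have hpsum : P 0 + P 1 + pt = 1 := by rw [← hsplit P]; exact hPsum
  have htnn : 0 ≤ t := Finset.sum_nonneg fun i _ => hQnn i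
  have hptnn : 0 ≤ pt := Finset.sum_nonneg fun i _ => (hPpos i).le
  have hpt0 : pt = 0 → t = 0 := by
    intro h0
    rcases s.eq_empty_or_nonempty with he | hne
    · rw [htdef, he, Finset.sum_empty]
    · exact absurd h0 (ne_of_gt (Finset.sum_pos (fun i _ => hPpos i) hne))
  -- tail bound
  have hT : t ^ α * pt ^ (1 - α) ≤ ∑ i ∈ s, Q i ^ α * P i ^ (1 - α) :=
    renyi_superadd hα s Q P (fun i _ => hQnn i) (fun i _ => hPpos i)
  -- pair bound
  have hpair : ((Q 0 + Q 1) / 2) ^ α * (A + B) ≤ Q 0 ^ α * A + Q 1 ^ α * B :=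
    renyi_pair_min hα (hQnn 0) hQ01 hApos.le hAB
  -- rewrite pair lower bound
  have hC : (Q 0 + Q 1) ^ α * (2 * M) ^ (1 - α) = ((Q 0 + Q 1) / 2) ^ α * (A + B) := by
    have hq01 : 0 ≤ Q 0 + Q 1 := by have := hQnn 0; have := hQnn 1; linarith
    rw [Real.mul_rpow (by norm_num) hMpos.le, hM',
      Real.div_rpow hq01 (by norm_num : (0:ℝ) ≤ 2)]
    have h2 : (2:ℝ) ^ (1 - α) = 2 / 2 ^ α := by
      rw [Real.rpow_sub (by norm_num), Real.rpow_one]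
    rw [h2]
    have h2α : (2:ℝ) ^ α ≠ 0 := by positivity
    field_simp
  -- combine
  have hcomb : ((Q 0 + Q 1) + t) ^ α * (2 * M + pt) ^ (1 - α)
      ≤ (Q 0 + Q 1) ^ α * (2 * M) ^ (1 - α) + t ^ α * pt ^ (1 - α) :=
    renyi_pair_ineq hα (by have := hQnn 0; have := hQnn 1; linarith) htnn
      (by positivity) hptnn hpt0
  have hq1 : Q 0 + Q 1 + t = 1 := htsum
  have hpt' : pt = 1 - P 0 - P 1 := by linarith
  calc (1 - P 0 - P 1 + 2 * M) ^ (1 - α)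
      = ((Q 0 + Q 1) + t) ^ α * (2 * M + pt) ^ (1 - α) := by
        rw [hq1, Real.one_rpow, one_mul, hpt']; ring_nf
    _ ≤ (Q 0 + Q 1) ^ α * (2 * M) ^ (1 - α) + t ^ α * pt ^ (1 - α) := hcomb
    _ ≤ Q 0 ^ α * A + Q 1 ^ α * B + t ^ α * pt ^ (1 - α) := by linarith [hpair, hC]
    _ ≤ Q 0 ^ α * A + Q 1 ^ α * B + ∑ i ∈ s, Q i ^ α * P i ^ (1 - α) := by linarith
    _ = ∑ i, Q i ^ α * P i ^ (1 - α) := (hsplit fun i => Q i ^ α * P i ^ (1 - α)).symm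

theorem renyi_lower_bound (k : ℕ) (α : ℝ) (hα : 1 < α) (P Q : Fin (k + 2) → ℝ)
    (hPpos : ∀ i, 0 < P i) (hPsum : ∑ i, P i = 1)
    (hQnn : ∀ i, 0 ≤ Q i) (hQsum : ∑ i, Q i = 1)
    (hPmono : ∀ i j : Fin (k + 2), i ≤ j → P j ≤ P i)
    (hmax : ∃ j : Fin (k + 2), j ≠ 0 ∧ Q 0 ≤ Q j) :
    -Real.log (1 - P 0 - P 1 +
        2 * ((P 0 ^ (1 - α) + P 1 ^ (1 - α)) / 2) ^ (1 / (1 - α))) ≤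
      (1 / (α - 1)) * Real.log (∑ i, Q i ^ α * P i ^ (1 - α)) := by
  obtain ⟨j, hj0, hQj⟩ := hmax
  have hP01 : P 1 ≤ P 0 := hPmono 0 1 (Fin.zero_le 1)
  set c : ℝ := 1 - P 0 - P 1 +
      2 * ((P 0 ^ (1 - α) + P 1 ^ (1 - α)) / 2) ^ (1 / (1 - α)) with hcdef
  have hc : 0 < c := by
    have hM : 0 < ((P 0 ^ (1 - α) + P 1 ^ (1 - α)) / 2) ^ (1 / (1 - α)) :=
      Real.rpow_pos_of_pos (div_pos (add_pos (Real.rpow_pos_of_pos (hPpos 0) _)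
        (Real.rpow_pos_of_pos (hPpos 1) _)) two_pos) _
    have h01 : (0 : Fin (k + 2)) ≠ 1 := by simp [Fin.ext_iff]
    have hP01sum : P 0 + P 1 ≤ 1 := by
      rw [← hPsum, ← Finset.sum_pair h01]
      exact Finset.sum_le_sum_of_subset_of_nonneg (Finset.subset_univ _)
        (fun i _ _ => (hPpos i).le)
    rw [hcdef]; linarith
  -- main inequality: c ^ (1 - α) ≤ ∑ …
  have hkey : c ^ (1 - α) ≤ ∑ i, Q i ^ α * P i ^ (1 - α) := by
    by_cases hq : Q 0 ≤ Q 1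
    · exact renyi_key k α hα P Q hPpos hPsum hQnn hQsum hP01 hq
    · push_neg at hq
      have hj1 : j ≠ 1 := by
        intro h; rw [h] at hQj; linarith
      set e := Equiv.swap (1 : Fin (k + 2)) j with hedef
      set Q' : Fin (k + 2) → ℝ := fun i => Q (e i) with hQ'def
      have hQ'0 : Q' 0 = Q 0 := by
        rw [hQ'def]
        simp only
        rw [hedef, Equiv.swap_apply_of_ne_of_ne (by simp [Fin.ext_iff]) (Ne.symm hj0)]
      have hQ'1 : Q' 1 = Q j := by
        rw [hQ'def]; simp only; rw [hedef, Equiv.swap_apply_left]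
      have hQ'j : Q' j = Q 1 := by
        rw [hQ'def]; simp only; rw [hedef, Equiv.swap_apply_right]
      have hQ'eq : ∀ i, i ≠ 1 → i ≠ j → Q' i = Q i := by
        intro i h1 h2
        rw [hQ'def]; simp only; rw [hedef, Equiv.swap_apply_of_ne_of_ne h1 h2]
      have hQ'nn : ∀ i, 0 ≤ Q' i := fun i => hQnn _
      have hQ'sum : ∑ i, Q' i = 1 := by
        rw [hQ'def]
        rw [Equiv.sum_comp e Q]
        exact hQsum
      have h1 := renyi_key k α hα P Q' hPpos hPsum hQ'nn hQ'sum hP01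
        (by rw [hQ'0, hQ'1]; exact hQj)
      refine h1.trans ?_
      -- ∑ Q'^α P^{1-α} ≤ ∑ Q^α P^{1-α}
      have h1j : (1 : Fin (k + 2)) ≤ j := by
        have hjv : (j : ℕ) ≠ 0 := by intro h; exact hj0 (Fin.ext (by rw [h, Fin.val_zero]))
        rw [Fin.le_def]
        simp only [Fin.val_one]
        omega
      have hPj1 : P j ≤ P 1 := hPmono 1 j h1j
      have hPj : P 1 ^ (1 - α) ≤ P j ^ (1 - α) :=
        Real.rpow_le_rpow_of_nonpos (hPpos j) hPj1 (by linarith)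
      have hQ1j : Q 1 ^ α ≤ Q j ^ α :=
        Real.rpow_le_rpow (hQnn 1) (hq.le.trans hQj) (by linarith)
      have hdiff : ∑ i, (Q' i ^ α * P i ^ (1 - α) - Q i ^ α * P i ^ (1 - α))
          = (Q j ^ α - Q 1 ^ α) * (P 1 ^ (1 - α) - P j ^ (1 - α)) := by
        rw [← Finset.sum_subset (Finset.subset_univ ({1, j} : Finset (Fin (k + 2))))
          (fun x _ hx => ?_)]
        · rw [Finset.sum_pair hj1.symm, hQ'1, hQ'j]
          ring
        · simp only [Finset.mem_insert, Finset.mem_singleton, not_or] at hx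
          rw [hQ'eq x hx.1 hx.2]
          ring
      have hle : (Q j ^ α - Q 1 ^ α) * (P 1 ^ (1 - α) - P j ^ (1 - α)) ≤ 0 :=
        mul_nonpos_of_nonneg_of_nonpos (by linarith) (by linarith)
      have := Finset.sum_sub_distrib (s := (Finset.univ : Finset (Fin (k + 2))))
        (f := fun i => Q' i ^ α * P i ^ (1 - α)) (g := fun i => Q i ^ α * P i ^ (1 - α))
      rw [this] at hdiff
      linarith
  -- log step
  have hcα : 0 < c ^ (1 - α) := Real.rpow_pos_of_pos hc _
  have hS : 0 < ∑ i, Q i ^ α * P i ^ (1 - α) := hcα.trans_le hkey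
  have hlog : (1 - α) * Real.log c ≤ Real.log (∑ i, Q i ^ α * P i ^ (1 - α)) := by
    rw [← Real.log_rpow hc]
    exact Real.log_le_log hcα hkey
  have hα1 : 0 < α - 1 := by linarith
  have heq : 1 / (α - 1) * ((1 - α) * Real.log c) = -Real.log c := by
    field_simp
    ring
  have := mul_le_mul_of_nonneg_left hlog (by positivity : (0:ℝ) ≤ 1 / (α - 1))
  rw [heq] at this
  exact this
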